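/- arXiv:1103.5159 — 2 statements merged into one kernel-verified Lean document; each statement's English description precedes it below -/
import Mathlib

section
/- For every m ≥ 1 and n ≥ 1, m^n = Σ_{d | n} d · χ_d(m), where χ_d(m) = (1/d) Σ_{e | d} μ(e) m^{d/e}. -/
/-- Witt number `χ_n(m) = (1/n) Σ_{d | n} μ(d) m^{n/d}` as a rational number. -/
noncomputable def witt (n m : ℕ) : ℚ :=
  (1 / n) * ∑ d ∈ n.divisors, ((ArithmeticFunction.moebius d : ℤ) : ℚ) * (m : ℚ) ^ (n / d)
/-- For `m ≥ 1`, `n ≥ 1`, `m^n = Σ_{d | n} d · χ_d(m)`. -/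
theorem stmt5 (m n : ℕ) (hm : 1 ≤ m) (hn : 1 ≤ n) :
    (m : ℚ) ^ n = ∑ d ∈ n.divisors, (d : ℚ) * witt d m := by
  have key := (ArithmeticFunction.sum_eq_iff_sum_smul_moebius_eq
    (R := ℚ) (f := fun d => ∑ e ∈ d.divisors,
      ((ArithmeticFunction.moebius e : ℤ) : ℚ) * (m : ℚ) ^ (d / e))
    (g := fun n => (m : ℚ) ^ n)).mpr ?_ n hn
  · rw [← key]
    apply Finset.sum_congr rfl
    intro d hd
    have hd0 : d ≠ 0 := Nat.pos_of_mem_divisors hd |>.ne'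
    rw [witt]
    field_simp
  · intro k hk
    rw [← Nat.sum_divisorsAntidiagonal (fun e f => ((ArithmeticFunction.moebius e : ℤ) : ℚ) * (m : ℚ) ^ f)]
    apply Finset.sum_congr rfl
    intro x hx
    have h1 := Nat.fst_mem_divisors_of_mem_antidiagonal hx
    have h2 : x.2 = k / x.1 := by
      rw [← (Nat.mem_divisorsAntidiagonal.mp hx).1,
        Nat.mul_div_cancel_left _ (Nat.pos_of_mem_divisors h1)]
    rw [h2, zsmul_eq_mul]
end

section
/- Let m ≥ 1. Then the Baer invariant of the free abelian group Z^m with respect to the variety of metabelian groups is free abelian of rank χ₂(χ₂(m)) = (1/2)·binom(m,2)·(binom(m,2) − 1), where χ₂(d) = d(d−1)/2. -/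
open Subgroup

namespace Stmt15
open Subgroup
open commutatorElement


abbrev T (d : ℕ) := {p : Fin d × Fin d // p.1 < p.2}

def cc (d : ℕ) (a b : Fin d → ℤ) : T d → ℤ := fun t => a t.1.1 * b t.1.2

@[ext] structure M (d : ℕ) where
  fst : Fin d → ℤ
  snd : T d → ℤ

namespace M
variable {d : ℕ}

instance : Mul (M d) := ⟨fun g h => ⟨g.fst + h.fst, g.snd + h.snd + cc d g.fst h.fst⟩⟩
instance : One (M d) := ⟨⟨0, 0⟩⟩
instance : Inv (M d) := ⟨fun g => ⟨-g.fst, cc d g.fst g.fst - g.snd⟩⟩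

lemma mul_def (g h : M d) :
    g * h = ⟨g.fst + h.fst, g.snd + h.snd + cc d g.fst h.fst⟩ := rfl
lemma one_def : (1 : M d) = ⟨0, 0⟩ := rfl
lemma inv_def (g : M d) : g⁻¹ = ⟨-g.fst, cc d g.fst g.fst - g.snd⟩ := rfl

instance : Group (M d) :=
  Group.ofLeftAxioms
    (fun a b c => by
      ext t <;> simp [mul_def, cc] <;> ring)
    (fun a => by ext t <;> simp [mul_def, one_def, cc])
    (fun a => by ext t <;> simp [mul_def, inv_def, one_def, cc] <;> ring)

lemma commutator_eq (g h : M d) :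
    ⁅g, h⁆ = ⟨0, cc d g.fst h.fst - cc d h.fst g.fst⟩ := by
  show g * h * g⁻¹ * h⁻¹ = _
  ext t <;> simp [mul_def, inv_def, cc] <;> ring

lemma central_of_fst_eq_zero {g : M d} (hg : g.fst = 0) (h : M d) : Commute g h := by
  show g * h = h * g
  ext t <;> simp [mul_def, hg, cc] <;> ring

/-- projection onto the first coordinate. -/
def proj : M d →* Multiplicative (Fin d → ℤ) where
  toFun g := Multiplicative.ofAdd g.fst
  map_one' := rfl
  map_mul' g h := rfl

end M
/-- In the multiplicative version of `ι → ℤ`, every element is the product of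
"coordinate" generators. -/
lemma prod_singles {ι : Type*} [Fintype ι] [DecidableEq ι] (v : ι → ℤ) :
    (∏ i : ι, (Multiplicative.ofAdd (Pi.single i 1 : ι → ℤ)) ^ (v i)) =
      Multiplicative.ofAdd v := by
  have : ∀ i : ι, (Multiplicative.ofAdd (Pi.single i 1 : ι → ℤ)) ^ (v i)
      = Multiplicative.ofAdd (Pi.single i (v i) : ι → ℤ) := by
    intro i
    rw [← ofAdd_zsmul]
    congr 1
    ext j
    by_cases h : j = i <;> simp [Pi.single_apply, h]
  rw [Finset.prod_congr rfl (fun i _ => this i), ← ofAdd_sum]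
  congr 1
  exact Finset.univ_sum_single v

/-- A subgroup of `Multiplicative (ι → ℤ)` containing all coordinate generators is `⊤`. -/
lemma eq_top_of_singles_mem {ι : Type*} [Fintype ι] [DecidableEq ι]
    (R : Subgroup (Multiplicative (ι → ℤ)))
    (h : ∀ i : ι, Multiplicative.ofAdd (Pi.single i 1 : ι → ℤ) ∈ R) : R = ⊤ := by
  rw [eq_top_iff]
  intro v _
  have : v = Multiplicative.ofAdd v.toAdd := rfl
  rw [this, ← prod_singles]
  exact Subgroup.prod_mem R (fun i _ => Subgroup.zpow_mem R (h i) _)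

/-- If a generating set consists of pairwise commuting elements, the group is commutative. -/
lemma commute_of_closure_eq_top {G : Type*} [Group G] (S : Set G)
    (hS : Subgroup.closure S = ⊤) (hc : ∀ a ∈ S, ∀ b ∈ S, Commute a b)
    (x y : G) : Commute x y := by
  have key : ∀ b : G, b ∈ Subgroup.closure S → ∀ a ∈ S, Commute a b := by
    intro b hb
    induction hb using Subgroup.closure_induction with
    | mem z hz => intro a ha; exact hc a ha z hz
    | one => intro a _; exact Commute.one_right a
    | mul z w _ _ hz hw => intro a ha; exact (hz a ha).mul_right (hw a ha)
    | inv z _ hz => intro a ha; exact (hz a ha).inv_right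
  have key2 : ∀ y : G, y ∈ Subgroup.closure S → Commute x y := by
    have hx : x ∈ Subgroup.closure S := by rw [hS]; trivial
    intro y hy
    induction hx using Subgroup.closure_induction with
    | mem z hz => exact key y hy z hz
    | one => exact Commute.one_left y
    | mul z w _ _ hz hw => exact hz.mul_left hw
    | inv z _ hz => exact hz.inv_left
  exact key2 y (by rw [hS]; trivial)

/-- A subgroup containing the kernel of `f` and with full image is everything. -/
lemma eq_top_of_ker_le_of_image {G H : Type*} [Group G] [Group H] (f : G →* H)
    (P : Subgroup G) (hker : f.ker ≤ P) (himg : ∀ h : H, ∃ p ∈ P, f p = h) : P = ⊤ := by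
  rw [eq_top_iff]
  intro g _
  obtain ⟨p, hp, hfp⟩ := himg (f g)
  have : g * p⁻¹ ∈ f.ker := by
    simp [MonoidHom.mem_ker, hfp]
  have := P.mul_mem (hker this) hp
  simpa using this

/-- Cardinality of the set of ordered pairs `i < j` in `Fin d`. -/
lemma card_T (d : ℕ) : Nat.card {p : Fin d × Fin d // p.1 < p.2} = d.choose 2 := by
  have e : {p : Fin d × Fin d // p.1 < p.2} ≃ (Σ j : Fin d, Fin j.val) :=
    { toFun := fun t => ⟨t.1.2, ⟨t.1.1.val, t.2⟩⟩
      invFun := fun s => ⟨(⟨s.2.val, lt_trans s.2.isLt s.1.isLt⟩, s.1), s.2.isLt⟩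
      left_inv := fun t => by
        apply Subtype.ext
        apply Prod.ext <;> simp
      right_inv := fun s => by
        apply Sigma.ext <;> simp }
  rw [Nat.card_congr e]
  simp only [Nat.card_eq_fintype_card, Fintype.card_sigma, Fintype.card_fin]
  rw [Fin.sum_univ_eq_sum_range (fun j => j) d]
  rw [Nat.choose_two_right]
  have := Finset.sum_range_id_mul_two d
  omega


theorem single_calc (d : ℕ) (t t' : T d) :
    (Pi.single t.1.1 1 : Fin d → ℤ) t'.1.1 * (Pi.single t.1.2 1 : Fin d → ℤ) t'.1.2
      - (Pi.single t.1.2 1 : Fin d → ℤ) t'.1.1 * (Pi.single t.1.1 1 : Fin d → ℤ) t'.1.2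
      = (Pi.single t 1 : T d → ℤ) t' := by
  classical
  obtain ⟨⟨i, j⟩, hij⟩ := t
  obtain ⟨⟨k, l⟩, hkl⟩ := t'
  simp only at hij hkl ⊢
  have hij' : i ≠ j := ne_of_lt hij
  simp only [Pi.single_apply, Subtype.mk.injEq, Prod.mk.injEq]
  by_cases hki : k = i <;> by_cases hlj : l = j
  · subst hki; subst hlj
    simp [hij', Ne.symm hij']
  all_goals
    simp [hki, hlj] <;>
    intro h <;> subst h <;>
    intro h <;> subst h <;>
    first
      | exact absurd hkl (lt_asymm hij)
      | exact absurd hij (lt_asymm hkl)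
      | exact absurd hkl (lt_irrefl _)
      | exact absurd hij (lt_irrefl _)


section Key

variable (H : Type*) [Group H] [IsFreeGroup H] (d : ℕ)

set_option maxHeartbeats 2000000 in
theorem key (π : H →* Multiplicative (Fin d → ℤ)) (hπ : Function.Surjective π) :
    Nonempty ((↥(commutator H) ⧸ ((⁅π.ker, ⊤⁆ : Subgroup H).subgroupOf (commutator H))) ≃*
      Multiplicative (T d → ℤ)) := by
  classical
  set N := π.ker with hN
  have hcomm_le_N : commutator H ≤ N := by
    rw [_root_.commutator_def, Subgroup.commutator_le]
    intro g _ h _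
    rw [MonoidHom.mem_ker, map_commutatorElement]
    exact commutatorElement_eq_one_iff_commute.mpr (mul_comm _ _)
  set K : Subgroup H := ⁅N, (⊤ : Subgroup H)⁆ with hK
  have hKD : K ≤ commutator H := by
    rw [_root_.commutator_def]
    exact Subgroup.commutator_mono le_top le_rfl
  -- choose preimages of the coordinate generators
  have hex : ∀ i : Fin d, ∃ g, π g = Multiplicative.ofAdd (Pi.single i 1) := fun i => hπ _
  choose hh hhspec using hex
  -- the representation into the model group
  set ρ : H →* M d := IsFreeGroup.lift (fun s => ⟨(π (IsFreeGroup.of s)).toAdd, 0⟩) with hρ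
  have hρ1 : ∀ x : H, (ρ x).fst = (π x).toAdd := by
    have h1 : M.proj.comp ρ = π := by
      apply IsFreeGroup.ext_hom
      intro s
      simp only [MonoidHom.comp_apply, hρ, IsFreeGroup.lift_of]
      rfl
    intro x
    have := congrArg (fun f : H →* Multiplicative (Fin d → ℤ) => (f x).toAdd) h1
    simpa [M.proj] using this
  have hρN : ∀ n ∈ N, (ρ n).fst = 0 := by
    intro n hn
    rw [hρ1]
    rw [hN, MonoidHom.mem_ker] at hn
    rw [hn]
    rfl
  have hρK : K ≤ ρ.ker := by
    rw [hK, Subgroup.commutator_le]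
    intro n hn g _
    rw [MonoidHom.mem_ker, map_commutatorElement]
    exact commutatorElement_eq_one_iff_commute.mpr (M.central_of_fst_eq_zero (hρN n hn) _)
  -- first coordinates of generators
  have hρhh : ∀ i : Fin d, (ρ (hh i)).fst = Pi.single i 1 := by
    intro i
    rw [hρ1, hhspec]
    rfl
  -- value of ρ on the basic commutators
  have hq : ∀ t : T d, ρ ⁅hh t.1.1, hh t.1.2⁆ = ⟨0, Pi.single t 1⟩ := by
    intro t
    rw [map_commutatorElement, M.commutator_eq]
    ext t'
    · simp
    · simp only [hρhh, cc, Pi.sub_apply]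
      exact single_calc d t t'
  have hqmem : ∀ t : T d, ⁅hh t.1.1, hh t.1.2⁆ ∈ commutator H := by
    intro t
    rw [_root_.commutator_def]
    exact Subgroup.commutator_mem_commutator (Subgroup.mem_top _) (Subgroup.mem_top _)
  -- the homomorphism Φ on the commutator subgroup, via the second coordinate of ρ
  have hfst0 : ∀ x : ↥(commutator H), (ρ (x : H)).fst = 0 :=
    fun x => hρN _ (hcomm_le_N x.2)
  set Φ : ↥(commutator H) →* Multiplicative (T d → ℤ) :=
    { toFun := fun x => Multiplicative.ofAdd ((ρ (x : H)).snd)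
      map_one' := by
        show Multiplicative.ofAdd ((ρ (((1 : ↥(commutator H))) : H)).snd) = 1
        have h1 : ρ (((1 : ↥(commutator H))) : H) = 1 := by simp
        rw [h1]
        rfl
      map_mul' := fun x y => by
        have hxy : ρ ((x * y : ↥(commutator H)) : H) = ρ (x : H) * ρ (y : H) := by
          rw [← map_mul]
          rfl
        have : (ρ (x : H) * ρ (y : H)).snd = (ρ (x : H)).snd + (ρ (y : H)).snd := by
          rw [M.mul_def]
          simp only [hfst0 x]
          funext t
          simp [cc]
        show Multiplicative.ofAdd ((ρ ((x * y : ↥(commutator H)) : H)).snd)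
          = Multiplicative.ofAdd ((ρ (x : H)).snd) * Multiplicative.ofAdd ((ρ (y : H)).snd)
        rw [hxy, this, ofAdd_add] } with hΦdef
  have hΦq : ∀ t : T d, Φ ⟨⁅hh t.1.1, hh t.1.2⁆, hqmem t⟩
      = Multiplicative.ofAdd (Pi.single t 1) := by
    intro t
    show Multiplicative.ofAdd ((ρ ⁅hh t.1.1, hh t.1.2⁆).snd) = _
    rw [hq t]
  have hΦK : ∀ x ∈ K.subgroupOf (commutator H), Φ x = 1 := by
    intro x hx
    rw [Subgroup.mem_subgroupOf] at hx
    have : ρ (x : H) = 1 := hρK hx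
    show Multiplicative.ofAdd ((ρ (x : H)).snd) = 1
    rw [this]
    rfl
  -- the quotient is commutative
  haveI : (K.subgroupOf (commutator H)).Normal := Subgroup.normal_subgroupOf
  letI QD := ↥(commutator H) ⧸ K.subgroupOf (commutator H)
  have hcommQD : ∀ a b : QD, a * b = b * a := by
    intro a b
    induction a using QuotientGroup.induction_on with
    | H x =>
    induction b using QuotientGroup.induction_on with
    | H y =>
    show QuotientGroup.mk (x * y) = QuotientGroup.mk (y * x)
    rw [QuotientGroup.eq]
    rw [Subgroup.mem_subgroupOf]
    have : (((x * y)⁻¹ * (y * x) : ↥(commutator H)) : H)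
        = ⁅((y : H))⁻¹, ((x : H))⁻¹⁆ := by
      push_cast
      group
    rw [this]
    exact Subgroup.commutator_mem_commutator (N.inv_mem (hcomm_le_N y.2)) (Subgroup.mem_top _)
  letI : CommGroup QD :=
    { (inferInstance : Group QD) with mul_comm := hcommQD }
  set Φbar : QD →* Multiplicative (T d → ℤ) :=
    QuotientGroup.lift (K.subgroupOf (commutator H)) Φ hΦK with hΦbardef
  -- the classes of basic commutators
  set cls : T d → QD := fun t => QuotientGroup.mk ⟨⁅hh t.1.1, hh t.1.2⁆, hqmem t⟩ with hclsdef
  have hΦbarcls : ∀ t : T d, Φbar (cls t) = Multiplicative.ofAdd (Pi.single t 1) := by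
    intro t
    rw [hclsdef]
    show Φ _ = _
    exact hΦq t
  -- the homomorphism Ψ
  set Ψ : Multiplicative (T d → ℤ) →* QD :=
    { toFun := fun v => ∏ t : T d, (cls t) ^ (v.toAdd t)
      map_one' := by simp
      map_mul' := fun u v => by
        have : ∀ t : T d, ((u * v).toAdd) t = u.toAdd t + v.toAdd t := fun t => rfl
        simp only [this, zpow_add]
        rw [Finset.prod_mul_distrib] } with hΨdef
  have hΦΨ : ∀ v, Φbar (Ψ v) = v := by
    intro v
    show Φbar (∏ t : T d, (cls t) ^ (v.toAdd t)) = v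
    rw [map_prod]
    simp only [map_zpow, hΦbarcls]
    rw [prod_singles]
    rfl
  -- the subgroup generated by basic commutators and K
  set Cq : Subgroup H :=
    Subgroup.closure (Set.range (fun t : T d => ⁅hh t.1.1, hh t.1.2⁆)) ⊔ K with hCq
  have hCq_eq : Cq = Subgroup.closure
      (Set.range (fun t : T d => ⁅hh t.1.1, hh t.1.2⁆) ∪ (K : Set H)) := by
    rw [Subgroup.closure_union, Subgroup.closure_eq]
  have hKC : K ≤ Cq := le_sup_right
  have hqC : ∀ t : T d, ⁅hh t.1.1, hh t.1.2⁆ ∈ Cq := fun t =>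
    (le_sup_left : _ ≤ Cq) (Subgroup.subset_closure (Set.mem_range_self t))
  haveI hKnormal : K.Normal := by rw [hK]; infer_instance
  haveI hCqNormal : Cq.Normal := by
    constructor
    intro c hc g
    rw [hCq_eq] at hc ⊢
    induction hc using Subgroup.closure_induction with
    | mem z hz =>
      rcases hz with hz | hz
      · have hzN : z ∈ N := by
          obtain ⟨t, rfl⟩ := hz
          exact hcomm_le_N (hqmem t)
        have hrw : g * z * g⁻¹ = z * ⁅z⁻¹, g⁆ := by group
        rw [hrw]
        refine Subgroup.mul_mem _ (Subgroup.subset_closure (Or.inl hz))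
          (Subgroup.subset_closure (Or.inr ?_))
        exact Subgroup.commutator_mem_commutator (N.inv_mem hzN) (Subgroup.mem_top _)
      · exact Subgroup.subset_closure (Or.inr (hKnormal.conj_mem z hz g))
    | one => simpa using Subgroup.one_mem _
    | mul z w hz hw ihz ihw =>
      have hrw : g * (z * w) * g⁻¹ = (g * z * g⁻¹) * (g * w * g⁻¹) := by group
      rw [hrw]
      exact Subgroup.mul_mem _ ihz ihw
    | inv z hz ihz =>
      have hrw : g * z⁻¹ * g⁻¹ = (g * z * g⁻¹)⁻¹ := by group
      rw [hrw]
      exact Subgroup.inv_mem _ ihz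
  -- H is generated by the hh i together with N
  have hHtop : Subgroup.closure (Set.range hh) ⊔ N = ⊤ := by
    apply eq_top_of_ker_le_of_image π
    · exact le_sup_right
    · intro w
      have himg : Subgroup.map π (Subgroup.closure (Set.range hh) ⊔ N) = ⊤ := by
        apply eq_top_of_singles_mem
        intro i
        rw [Subgroup.mem_map]
        exact ⟨hh i, Subgroup.mem_sup_left (Subgroup.subset_closure (Set.mem_range_self i)),
          hhspec i⟩
      have hw : w ∈ Subgroup.map π (Subgroup.closure (Set.range hh) ⊔ N) := by
        rw [himg]; trivial
      exact Subgroup.mem_map.mp hw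
  -- the quotient by Cq is commutative, hence Cq contains the commutator subgroup
  set mkC : H →* H ⧸ Cq := QuotientGroup.mk' Cq with hmkC
  have hmemC : ∀ x y : H, ⁅x, y⁆ ∈ Cq → Commute (mkC x) (mkC y) := by
    intro x y hxy
    apply commutatorElement_eq_one_iff_commute.mp
    rw [← map_commutatorElement]
    exact (QuotientGroup.eq_one_iff _).mpr hxy
  have habel : ∀ g h : H, ⁅g, h⁆ ∈ Cq := by
    intro g h
    have hcomm : Commute (mkC g) (mkC h) := by
      apply commute_of_closure_eq_top (mkC '' (Set.range hh ∪ (N : Set H)))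
      · rw [Set.image_union, Subgroup.closure_union, ← MonoidHom.map_closure,
          ← MonoidHom.map_closure, Subgroup.closure_eq, ← Subgroup.map_sup, hHtop]
        exact Subgroup.map_top_of_surjective mkC (QuotientGroup.mk'_surjective Cq)
      · rintro a ⟨x, hx, rfl⟩ b ⟨y, hy, rfl⟩
        rcases hx with hx | hx
        · rcases hy with hy | hy
          · obtain ⟨i, rfl⟩ := hx
            obtain ⟨j, rfl⟩ := hy
            rcases lt_trichotomy i j with hij | hij | hij
            · exact hmemC _ _ (hqC ⟨(i, j), hij⟩)
            · subst hij
              exact hmemC _ _ (by rw [commutatorElement_self]; exact Subgroup.one_mem _)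
            · apply hmemC
              rw [← commutatorElement_inv]
              exact Subgroup.inv_mem _ (hqC ⟨(j, i), hij⟩)
          · apply hmemC
            rw [← commutatorElement_inv]
            refine Subgroup.inv_mem _ (hKC ?_)
            exact Subgroup.commutator_mem_commutator hy (Subgroup.mem_top _)
        · exact hmemC _ _ (hKC (Subgroup.commutator_mem_commutator hx (Subgroup.mem_top _)))
    have h1 := commutatorElement_eq_one_iff_commute.mpr hcomm
    rw [← map_commutatorElement] at h1
    exact (QuotientGroup.eq_one_iff _).mp h1
  have hgen : commutator H ≤ Cq := by
    rw [_root_.commutator_def, Subgroup.commutator_le]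
    intro g _ h _
    exact habel g h
  -- Ψ is surjective
  set mkD : ↥(commutator H) →* QD := QuotientGroup.mk' (K.subgroupOf (commutator H)) with hmkD
  have hΨsurj : Function.Surjective Ψ := by
    set V : Subgroup H := Subgroup.map (commutator H).subtype (Ψ.range.comap mkD) with hV
    have hclsR : ∀ t : T d, cls t ∈ Ψ.range := by
      intro t
      refine ⟨Multiplicative.ofAdd (Pi.single t 1), ?_⟩
      have hΨval : Ψ (Multiplicative.ofAdd (Pi.single t 1))
          = ∏ s : T d, (cls s) ^ (((Pi.single t (1 : ℤ)) : T d → ℤ) s) := rfl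
      rw [hΨval, Fintype.prod_eq_single t]
      · rw [Pi.single_eq_same, zpow_one]
      · intro s hs
        rw [Pi.single_eq_of_ne hs, zpow_zero]
    have hqV : ∀ t : T d, ⁅hh t.1.1, hh t.1.2⁆ ∈ V := by
      intro t
      rw [hV, Subgroup.mem_map]
      exact ⟨⟨_, hqmem t⟩, (by rw [Subgroup.mem_comap]; exact hclsR t), rfl⟩
    have hKV : K ≤ V := by
      intro k hk
      rw [hV, Subgroup.mem_map]
      refine ⟨⟨k, hKD hk⟩, ?_, rfl⟩
      rw [Subgroup.mem_comap]
      have h1 : mkD ⟨k, hKD hk⟩ = 1 :=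
        (QuotientGroup.eq_one_iff _).mpr (Subgroup.mem_subgroupOf.mpr hk)
      rw [h1]
      exact Ψ.range.one_mem
    have hCV : Cq ≤ V := by
      rw [hCq]
      apply sup_le _ hKV
      rw [Subgroup.closure_le]
      rintro _ ⟨t, rfl⟩
      exact hqV t
    intro a
    induction a using QuotientGroup.induction_on with
    | H x =>
      have hxV : (x : H) ∈ V := hCV (hgen x.2)
      rw [hV, Subgroup.mem_map] at hxV
      obtain ⟨x', hx', hxx⟩ := hxV
      have hxex : x' = x := Subtype.ext hxx
      subst hxex
      rw [Subgroup.mem_comap] at hx'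
      exact hx'
  have hinj : Function.Injective Φbar := by
    intro a b hab
    obtain ⟨u, rfl⟩ := hΨsurj a
    obtain ⟨v, rfl⟩ := hΨsurj b
    rw [hΦΨ u, hΦΨ v] at hab
    rw [hab]
  have hsurj : Function.Surjective Φbar := fun v => ⟨Ψ v, hΦΨ v⟩
  exact ⟨MulEquiv.ofBijective Φbar ⟨hinj, hsurj⟩⟩

theorem key' (π : H →* Multiplicative (Fin d → ℤ)) (hπ : Function.Surjective π)
    (D Q : Subgroup H) (hD : D = commutator H) (hQ : Q = ⁅π.ker, ⊤⁆)
    [hn : (Q.subgroupOf D).Normal] :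
    Nonempty ((↥D ⧸ Q.subgroupOf D) ≃* Multiplicative (T d → ℤ)) := by
  subst hD hQ
  exact key H d π hπ

end Key

/-- Transferring a quotient of subgroups along an injective homomorphism. -/
lemma quotient_transfer {G G' : Type*} [Group G] [Group G'] (f : G →* G')
    (hf : Function.Injective f) (P Q : Subgroup G) (P' Q' : Subgroup G')
    (hP : P.map f = P') (hQ : Q.map f = Q')
    [h1 : (Q.subgroupOf P).Normal] [h2 : (Q'.subgroupOf P').Normal] :
    Nonempty ((↥P ⧸ Q.subgroupOf P) ≃* (↥P' ⧸ Q'.subgroupOf P')) := by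
  subst hP hQ
  refine ⟨QuotientGroup.congr _ _ (P.equivMapOfInjective f hf) ?_⟩
  ext x
  rw [Subgroup.mem_map, Subgroup.mem_subgroupOf]
  simp only [MonoidHom.coe_coe]
  constructor
  · rintro ⟨y, hy, rfl⟩
    rw [Subgroup.mem_subgroupOf] at hy
    rw [Subgroup.coe_equivMapOfInjective_apply]
    exact ⟨y, hy, rfl⟩
  · intro hx
    obtain ⟨q, hq, hqx⟩ := hx
    have hqP : q ∈ P := by
      obtain ⟨p, hp, hpx⟩ := x.2
      have hqp : q = p := hf (by rw [hqx, hpx])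
      rwa [hqp]
    refine ⟨⟨q, hqP⟩, ?_, ?_⟩
    · rw [Subgroup.mem_subgroupOf]; exact hq
    · apply Subtype.ext
      rw [Subgroup.coe_equivMapOfInjective_apply]
      exact hqx

lemma lcs_succ (G : Type*) [Group G] (n : ℕ) :
    (⊤ : Subgroup G).lowerCentralSeries (n + 1) = ⁅(⊤ : Subgroup G).lowerCentralSeries n, ⊤⁆ := rfl

lemma map_lcs {G G' : Type*} [Group G] [Group G'] (e : G ≃* G') (n : ℕ) :
    ((⊤ : Subgroup G).lowerCentralSeries n).map e.toMonoidHom = (⊤ : Subgroup G').lowerCentralSeries n := by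
  induction n with
  | zero =>
    simp only [Subgroup.lowerCentralSeries_zero]
    exact Subgroup.map_top_of_surjective _ e.surjective
  | succ n ih =>
    rw [lcs_succ, lcs_succ, Subgroup.map_commutator, ih,
      Subgroup.map_top_of_surjective _ e.surjective]

section FreeGroupPart

variable (m : ℕ)

/-- The abelianization homomorphism of the free group on `Fin m`. -/
def pz : FreeGroup (Fin m) →* Multiplicative (Fin m → ℤ) :=
  FreeGroup.lift (fun i => Multiplicative.ofAdd (Pi.single i 1))

lemma pz_surj : Function.Surjective (pz m) := by
  rw [← MonoidHom.range_eq_top]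
  apply eq_top_of_singles_mem
  intro i
  exact ⟨FreeGroup.of i, FreeGroup.lift_apply_of⟩

lemma pz_ker : (pz m).ker = commutator (FreeGroup (Fin m)) := by
  classical
  apply le_antisymm
  · intro x hx
    set A := Abelianization (FreeGroup (Fin m))
    set Ψ₀ : Multiplicative (Fin m → ℤ) →* A :=
      { toFun := fun v => ∏ i, (Abelianization.of (FreeGroup.of i)) ^ (v.toAdd i)
        map_one' := by simp
        map_mul' := fun u v => by
          have h1 : ∀ i, (u * v).toAdd i = u.toAdd i + v.toAdd i := fun _ => rfl
          simp only [h1, zpow_add]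
          rw [Finset.prod_mul_distrib] } with hΨ₀
    have hsec : ∀ y, Ψ₀ (pz m y) = Abelianization.of y := by
      have hcomp : Ψ₀.comp (pz m) = Abelianization.of := by
        apply FreeGroup.ext_hom
        intro i
        rw [MonoidHom.comp_apply]
        have h2 : pz m (FreeGroup.of i) = Multiplicative.ofAdd (Pi.single i 1) :=
          FreeGroup.lift_apply_of
        rw [h2]
        have h3 : Ψ₀ (Multiplicative.ofAdd (Pi.single i 1))
            = ∏ k, (Abelianization.of (FreeGroup.of k))
                ^ (((Pi.single i (1 : ℤ)) : Fin m → ℤ) k) := rfl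
        rw [h3, Fintype.prod_eq_single i]
        · rw [Pi.single_eq_same, zpow_one]
        · intro s hs
          rw [Pi.single_eq_of_ne hs, zpow_zero]
      intro y
      exact DFunLike.congr_fun hcomp y
    rw [MonoidHom.mem_ker] at hx
    have h4 : Abelianization.of x = 1 := by rw [← hsec, hx, map_one]
    exact (QuotientGroup.eq_one_iff x).mp h4
  · rw [_root_.commutator_def, Subgroup.commutator_le]
    intro g _ h _
    rw [MonoidHom.mem_ker, map_commutatorElement]
    exact commutatorElement_eq_one_iff_commute.mpr (mul_comm _ _)

end FreeGroupPart

end Stmt15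

open Stmt15

/-- For `m ≥ 1`, the Baer invariant of `ℤ^m = F/γ₂(F)` (`F` free of rank `m`)
with respect to the variety of metabelian groups, namely
`γ₂(γ₂(F))/[γ₃(F), γ₂(F)]` (with `γ_{k+1}(F) = lowerCentralSeries F k`), is free abelian of
rank `χ₂(χ₂(m)) = (1/2)·C(m,2)·(C(m,2) − 1)`, where `χ₂(d) = d(d−1)/2`. -/
theorem stmt15 (m : ℕ) (hm : 1 ≤ m) (F : Type) [Group F] (e : F ≃* FreeGroup (Fin m))
    (r : ℕ)
    (hr : (r : ℚ) = (1 / 2) * (m.choose 2 : ℚ) * ((m.choose 2 : ℚ) - 1)) :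
    Nonempty
      ((↥⁅(⊤ : Subgroup F).lowerCentralSeries 1, (⊤ : Subgroup F).lowerCentralSeries 1⁆ ⧸
          ⁅(⊤ : Subgroup F).lowerCentralSeries 2, (⊤ : Subgroup F).lowerCentralSeries 1⁆.subgroupOf
            ⁅(⊤ : Subgroup F).lowerCentralSeries 1, (⊤ : Subgroup F).lowerCentralSeries 1⁆) ≃*
        Multiplicative (Fin r →₀ ℤ)) := by
  classical
  -- Step 1: the first application of `key` computes `γ₂/γ₃` of the free group
  obtain ⟨e1⟩ := key' (FreeGroup (Fin m)) m (pz m) (pz_surj m)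
    ((⊤ : Subgroup (FreeGroup (Fin m))).lowerCentralSeries 1) ((⊤ : Subgroup (FreeGroup (Fin m))).lowerCentralSeries 2)
    top_lowerCentralSeries_one
    (by rw [lcs_succ (FreeGroup (Fin m)) 1, top_lowerCentralSeries_one, pz_ker])
  -- the identification of index types
  have hcardm : Fintype.card (T m) = m.choose 2 := by
    rw [← Nat.card_eq_fintype_card]; exact card_T m
  let eqm : T m ≃ Fin (m.choose 2) := Fintype.equivFinOfCardEq hcardm
  let am : Multiplicative (T m → ℤ) ≃* Multiplicative (Fin (m.choose 2) → ℤ) :=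
    AddEquiv.toMultiplicative (AddEquiv.arrowCongr eqm (AddEquiv.refl ℤ))
  -- Step 2: the surjection from γ₂ with kernel γ₃
  set L1 := (⊤ : Subgroup (FreeGroup (Fin m))).lowerCentralSeries 1 with hL1
  set L2 := (⊤ : Subgroup (FreeGroup (Fin m))).lowerCentralSeries 2 with hL2
  set π₁ : ↥L1 →* Multiplicative (Fin (m.choose 2) → ℤ) :=
    (am.toMonoidHom.comp e1.toMonoidHom).comp (QuotientGroup.mk' (L2.subgroupOf L1)) with hπ₁
  have hπ₁surj : Function.Surjective π₁ := by
    intro v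
    obtain ⟨w, hw⟩ := QuotientGroup.mk'_surjective (L2.subgroupOf L1) (e1.symm (am.symm v))
    refine ⟨w, ?_⟩
    rw [hπ₁]
    simp only [MonoidHom.comp_apply, MulEquiv.coe_toMonoidHom, hw,
      MulEquiv.apply_symm_apply]
  have hπ₁ker : π₁.ker = L2.subgroupOf L1 := by
    ext x
    rw [MonoidHom.mem_ker, hπ₁]
    simp only [MonoidHom.comp_apply, MulEquiv.coe_toMonoidHom]
    rw [MulEquiv.map_eq_one_iff, MulEquiv.map_eq_one_iff, QuotientGroup.mk'_apply,
      QuotientGroup.eq_one_iff]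
  -- Step 3: second application of `key`, to the free group γ₂
  obtain ⟨e2⟩ := key' (↥L1) (m.choose 2) π₁ hπ₁surj
    (commutator ↥L1) ⁅L2.subgroupOf L1, (⊤ : Subgroup ↥L1)⁆ rfl (by rw [hπ₁ker])
  -- Step 4: push down to subgroups of the free group
  have hL21 : L2 ≤ L1 := Subgroup.lowerCentralSeries_antitone _ (by norm_num)
  have hmap1 : (commutator ↥L1).map L1.subtype = ⁅L1, L1⁆ := by
    rw [_root_.commutator_def, Subgroup.map_commutator, ← MonoidHom.range_eq_map,
      Subgroup.range_subtype]
  have hmap2 : (⁅L2.subgroupOf L1, (⊤ : Subgroup ↥L1)⁆).map L1.subtype = ⁅L2, L1⁆ := by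
    rw [Subgroup.map_commutator, Subgroup.subgroupOf_map_subtype, inf_eq_left.mpr hL21,
      ← MonoidHom.range_eq_map, Subgroup.range_subtype]
  obtain ⟨e3⟩ := quotient_transfer L1.subtype (Subgroup.subtype_injective L1)
    (commutator ↥L1) ⁅L2.subgroupOf L1, (⊤ : Subgroup ↥L1)⁆ ⁅L1, L1⁆ ⁅L2, L1⁆ hmap1 hmap2
  -- Step 5: transfer from `F` to the free group along `e`
  have hmapF1 : (⁅(⊤ : Subgroup F).lowerCentralSeries 1, (⊤ : Subgroup F).lowerCentralSeries 1⁆).map e.toMonoidHom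
      = ⁅L1, L1⁆ := by
    rw [hL1, Subgroup.map_commutator, map_lcs]
  have hmapF2 : (⁅(⊤ : Subgroup F).lowerCentralSeries 2, (⊤ : Subgroup F).lowerCentralSeries 1⁆).map e.toMonoidHom
      = ⁅L2, L1⁆ := by
    rw [hL2, hL1, Subgroup.map_commutator, map_lcs, map_lcs]
  obtain ⟨e4⟩ := quotient_transfer e.toMonoidHom e.injective
    ⁅(⊤ : Subgroup F).lowerCentralSeries 1, (⊤ : Subgroup F).lowerCentralSeries 1⁆
    ⁅(⊤ : Subgroup F).lowerCentralSeries 2, (⊤ : Subgroup F).lowerCentralSeries 1⁆ ⁅L1, L1⁆ ⁅L2, L1⁆ hmapF1 hmapF2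
  -- Step 6: the rank computation
  have hrc : r = (m.choose 2).choose 2 := by
    have hc := Nat.cast_choose_two ℚ (m.choose 2)
    have : (r : ℚ) = (((m.choose 2).choose 2 : ℕ) : ℚ) := by
      rw [hr, hc]; ring
    exact_mod_cast this
  have hcardc : Fintype.card (T (m.choose 2)) = r := by
    rw [← Nat.card_eq_fintype_card, card_T, hrc]
  let eqc : T (m.choose 2) ≃ Fin r := Fintype.equivFinOfCardEq hcardc
  let ac : Multiplicative (T (m.choose 2) → ℤ) ≃* Multiplicative (Fin r →₀ ℤ) :=
    AddEquiv.toMultiplicative ((AddEquiv.arrowCongr eqc (AddEquiv.refl ℤ)).trans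
      (Finsupp.addEquivFunOnFinite).symm)
  exact ⟨e4.trans (e3.symm.trans (e2.trans ac))⟩
end
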